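/- Let x : ℕ → ℤ be a CL trajectory with gcd(x 0, x 1) = 1. Then there exists N such that either x n = 1 for all n ≥ N, or x n = −1 for all n ≥ N, or x(n+6) = x n for all n ≥ N and the tuple (x N, x(N+1), x(N+2), x(N+3), x(N+4), x(N+5)) is a cyclic rotation of (−2, 1, 3, 2, −1, −3). -/

import Mathlib

/-- A CL trajectory: `x (n+2) = (x n + x (n+1)) / 2` when `x n + x (n+1)` is even,
and `x (n+2) = x (n+1) - x n` when it is odd. -/
def IsCLTrajectory (x : ℕ → ℤ) : Prop :=
  ∀ n : ℕ,
    (Even (x n + x (n + 1)) → x (n + 2) = (x n + x (n + 1)) / 2) ∧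
    (Odd (x n + x (n + 1)) → x (n + 2) = x (n + 1) - x n)

def psi (a b : ℤ) : ℕ := a.natAbs + b.natAbs + (a - b).natAbs

def c6 (j : ℕ) : ℤ :=
  if j % 6 = 0 then 3 else if j % 6 = 1 then 2 else if j % 6 = 2 then -1
  else if j % 6 = 3 then -3 else if j % 6 = 4 then -2 else 1

lemma c6_period (j : ℕ) : c6 (j + 6) = c6 j := by simp [c6, Nat.add_mod_right]

variable {x : ℕ → ℤ}

lemma step_even (hx : IsCLTrajectory x) (n : ℕ) (h : (x n + x (n+1)) % 2 = 0) :
    x n + x (n+1) = 2 * x (n+2) := by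
  have he : Even (x n + x (n+1)) := Int.even_iff.mpr h
  have h1 := (hx n).1 he
  obtain ⟨r, hr⟩ := he
  omega

lemma step_odd (hx : IsCLTrajectory x) (n : ℕ) (h : (x n + x (n+1)) % 2 = 1) :
    x (n+2) = x (n+1) - x n :=
  (hx n).2 (Int.odd_iff.mpr h)

lemma gcd_all (hx : IsCLTrajectory x) (hg : Int.gcd (x 0) (x 1) = 1) :
    ∀ n, Int.gcd (x n) (x (n+1)) = 1 := by
  intro n
  induction n with
  | zero => exact hg
  | succ n ih =>
    rw [← Int.isCoprime_iff_gcd_eq_one] at ih ⊢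
    obtain ⟨u, v, huv⟩ := ih
    rcases Int.even_or_odd (x n + x (n+1)) with he | ho
    · have h2 : x n + x (n+1) = 2 * x (n+2) := by
        have h1 := (hx n).1 he
        obtain ⟨r, hr⟩ := he
        omega
      exact ⟨v - u, 2*u, by linear_combination huv - u * h2⟩
    · have h2 := (hx n).2 ho
      exact ⟨u + v, -u, by linear_combination huv - u * h2⟩

lemma unit_of_dvd_dvd {u a b : ℤ} (h1 : u ∣ a) (h2 : u ∣ b) (hg : Int.gcd a b = 1) :
    u.natAbs = 1 := by
  have h3 := Int.dvd_coe_gcd h1 h2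
  rw [hg] at h3
  simpa using Nat.dvd_one.mp (Int.natAbs_dvd_natAbs.mpr h3)

lemma not_both_even {a b : ℤ} (hg : Int.gcd a b = 1) (ha : a % 2 = 0) (hb : b % 2 = 0) :
    False := by
  have h2 : (2:ℤ) ∣ (Int.gcd a b : ℤ) :=
    Int.dvd_coe_gcd (Int.dvd_of_emod_eq_zero ha) (Int.dvd_of_emod_eq_zero hb)
  rw [hg] at h2; norm_num at h2

lemma rigid {a b c : ℤ} (h : a + b = 2*c) (ha : a % 2 = 1) (hb : b % 2 = 1)
    (hne : psi b c = psi a b) (hV : 6 ≤ psi a b) :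
    (a = b ∨ a = -b) ∨ (2 * b.natAbs = psi a b ∧ 2 * c.natAbs < psi a b ∧ 2*(b-c).natAbs < psi a b) := by
  unfold psi at *; omega

lemma psi4_absurd {a b c : ℤ} (h : a + b = 2*c) (ha : a % 2 = 1) (hb : b % 2 = 1)
    (h1 : psi a b = 4) (h2 : psi b c = 4) : False := by
  unfold psi at *; omega

lemma psi_nonincr (hx : IsCLTrajectory x) (n : ℕ) :
    psi (x (n+1)) (x (n+2)) ≤ psi (x n) (x (n+1)) := by
  rcases Int.emod_two_eq (x n + x (n+1)) with h | h
  · have h1 := step_even hx n h; unfold psi; omega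
  · rw [step_odd hx n h]; unfold psi; omega

lemma find_oo (hx : IsCLTrajectory x) (hga : ∀ n, Int.gcd (x n) (x (n+1)) = 1) :
    ∃ n, x n % 2 = 1 ∧ x (n+1) % 2 = 1 := by
  have hg0 : Int.gcd (x 0) (x 1) = 1 := hga 0
  rcases Int.emod_two_eq (x 0) with h0 | h0 <;> rcases Int.emod_two_eq (x 1) with h1 | h1
  · exact absurd (not_both_even hg0 h0 h1) (by simp)
  · have h2 : x 2 = x 1 - x 0 := step_odd hx 0 (by show (x 0 + x 1) % 2 = 1; omega)
    exact ⟨1, h1, by show x 2 % 2 = 1; omega⟩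
  · have h2 : x 2 = x 1 - x 0 := step_odd hx 0 (by show (x 0 + x 1) % 2 = 1; omega)
    have h3 : x 3 = x 2 - x 1 := step_odd hx 1 (by show (x 1 + x 2) % 2 = 1; omega)
    exact ⟨2, by show x 2 % 2 = 1; omega, by show x 3 % 2 = 1; omega⟩
  · exact ⟨0, h0, h1⟩

section Const
variable (hx : IsCLTrajectory x) (hga : ∀ n, Int.gcd (x n) (x (n+1)) = 1)
variable {V : ℕ} (hc : ∀ n, psi (x n) (x (n+1)) = V) (hV : 6 ≤ V)

include hx hga hc hV

lemma oo_super (n : ℕ) (h0 : x n % 2 = 1) (h1 : x (n+1) % 2 = 1) :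
    x (n+2) % 2 = 0 ∧ 2 * (x (n+1)).natAbs = V ∧ 2 * (x (n+2)).natAbs < V := by
  have h2 : x n + x (n+1) = 2 * x (n+2) := step_even hx n (by omega)
  have hne : psi (x (n+1)) (x (n+2)) = psi (x n) (x (n+1)) := by rw [hc, hc]
  have hV' : 6 ≤ psi (x n) (x (n+1)) := by rw [hc]; exact hV
  rcases rigid h2 h0 h1 hne hV' with (heq | heq) | ⟨hb, hcn, -⟩
  · have hu : (x n).natAbs = 1 := unit_of_dvd_dvd dvd_rfl (heq ▸ dvd_rfl) (hga n)
    exfalso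
    have := hc n; unfold psi at this; omega
  · have hd : x n ∣ x (n+1) := ⟨-1, by omega⟩
    have hu : (x n).natAbs = 1 := unit_of_dvd_dvd dvd_rfl hd (hga n)
    exfalso
    have := hc n; unfold psi at this; omega
  · rw [hc] at hb hcn
    rcases Int.emod_two_eq (x (n+2)) with hp | hp
    · exact ⟨hp, hb, hcn⟩
    · exfalso
      have h3 : x (n+1) + x (n+2) = 2 * x (n+3) := step_even hx (n+1) (by show (x (n+1) + x (n+2)) % 2 = 0; omega)
      have hne2 : psi (x (n+2)) (x (n+3)) = psi (x (n+1)) (x (n+2)) := by rw [hc, hc]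
      have hV2 : 6 ≤ psi (x (n+1)) (x (n+2)) := by rw [hc]; exact hV
      rcases rigid h3 h1 hp hne2 hV2 with (heq | heq) | ⟨hb2, -, -⟩
      · have hu : (x (n+1)).natAbs = 1 := unit_of_dvd_dvd dvd_rfl (heq ▸ dvd_rfl) (hga (n+1))
        omega
      · have hd : x (n+1) ∣ x (n+2) := ⟨-1, by omega⟩
        have hu : (x (n+1)).natAbs = 1 := unit_of_dvd_dvd dvd_rfl hd (hga (n+1))
        omega
      · rw [hc] at hb2; omega

lemma super_step (n : ℕ) (h0 : x n % 2 = 1) (h1 : x (n+1) % 2 = 0)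
    (hb : 2 * (x n).natAbs = V) :
    x (n+3) % 2 = 1 ∧ x (n+4) % 2 = 0 ∧ 2 * (x (n+3)).natAbs = V ∧
      2 * (3 * x (n+4) - 2 * x (n+3)) = 3 * x (n+1) - 2 * x n := by
  have e2 : x (n+2) = x (n+1) - x n := step_odd hx n (by omega)
  have e3 : x (n+3) = x (n+2) - x (n+1) := step_odd hx (n+1) (by show (x (n+1) + x (n+2)) % 2 = 1; omega)
  have h2 : x (n+2) % 2 = 1 := by omega
  have h3 : x (n+3) % 2 = 1 := by omega
  have e4 : x (n+2) + x (n+3) = 2 * x (n+4) := step_even hx (n+2) (by show (x (n+2) + x (n+3)) % 2 = 0; omega)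
  have hne : psi (x (n+3)) (x (n+4)) = psi (x (n+2)) (x (n+3)) := by rw [hc, hc]
  have hV' : 6 ≤ psi (x (n+2)) (x (n+3)) := by rw [hc]; exact hV
  rcases rigid e4 h2 h3 hne hV' with (heq | heq) | ⟨hb3, hc4, -⟩
  · -- x(n+2) = x(n+3) ⇒ x(n+1) = 0
    exfalso
    have hz : x (n+1) = 0 := by omega
    have hd : x n ∣ x (n+1) := by rw [hz]; exact dvd_zero _
    have hu : (x n).natAbs = 1 := unit_of_dvd_dvd dvd_rfl hd (hga n)
    omega
  · -- x(n+2) = -x(n+3) ⇒ x(n+1) = 2 x n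
    exfalso
    have hd : x n ∣ x (n+1) := ⟨2, by omega⟩
    have hu : (x n).natAbs = 1 := unit_of_dvd_dvd dvd_rfl hd (hga n)
    omega
  · rw [hc] at hb3 hc4
    rcases Int.emod_two_eq (x (n+4)) with hp | hp
    · exact ⟨h3, hp, hb3, by omega⟩
    · exfalso
      have e5 : x (n+3) + x (n+4) = 2 * x (n+5) := step_even hx (n+3) (by show (x (n+3) + x (n+4)) % 2 = 0; omega)
      have hne2 : psi (x (n+4)) (x (n+5)) = psi (x (n+3)) (x (n+4)) := by rw [hc, hc]
      have hV2 : 6 ≤ psi (x (n+3)) (x (n+4)) := by rw [hc]; exact hV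
      rcases rigid e5 h3 hp hne2 hV2 with (heq | heq) | ⟨hb4, -, -⟩
      · omega
      · omega
      · rw [hc] at hb4; omega

lemma descend : ∀ m n, x n % 2 = 1 → x (n+1) % 2 = 0 → 2 * (x n).natAbs = V →
    (3 * x (n+1) - 2 * x n).natAbs ≤ m →
    ∃ k, (x k = 3 ∧ x (k+1) = 2) ∨ (x k = -3 ∧ x (k+1) = -2) := by
  intro m
  induction m using Nat.strong_induction_on with
  | _ m ih =>
    intro n h0 h1 hb hm
    by_cases h00 : 3 * x (n+1) - 2 * x n = 0
    · set u : ℤ := x n - x (n+1) with hudef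
      have hu : x n = 3 * u := by omega
      have hd1 : u ∣ x n := ⟨3, by omega⟩
      have hd2 : u ∣ x (n+1) := ⟨2, by omega⟩
      have hu1 : u.natAbs = 1 := unit_of_dvd_dvd hd1 hd2 (hga n)
      refine ⟨n, ?_⟩
      rcases Int.natAbs_eq_iff.mp hu1 with h | h
      · left; constructor <;> omega
      · right; constructor <;> omega
    · obtain ⟨p3, p4, hb3, hhalf⟩ := super_step hx hga hc hV n h0 h1 hb
      exact ih (3 * x (n+4) - 2 * x (n+3)).natAbs (by omega) (n+3) p3 p4 hb3 (le_refl _)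

lemma reach32 : ∃ k, (x k = 3 ∧ x (k+1) = 2) ∨ (x k = -3 ∧ x (k+1) = -2) := by
  obtain ⟨n, hn0, hn1⟩ := find_oo hx hga
  obtain ⟨hp, hb, -⟩ := oo_super hx hga hc hV n hn0 hn1
  exact descend hx hga hc hV _ (n+1) hn1 hp hb (le_refl _)

end Const

lemma step_val (hx : IsCLTrajectory x) (n : ℕ) {a b : ℤ} (c : ℤ)
    (ha : x n = a) (hb : x (n+1) = b)
    (hstep : ((a + b) % 2 = 0 → a + b = 2 * c) ∧ ((a + b) % 2 = 1 → c = b - a)) :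
    x (n+2) = c := by
  rcases Int.emod_two_eq (a + b) with h | h
  · have h2 := step_even hx n (by rw [ha, hb]; exact h)
    rw [ha, hb] at h2
    have := hstep.1 h; omega
  · have h2 := step_odd hx n (by rw [ha, hb]; exact h)
    rw [ha, hb] at h2
    have := hstep.2 h; omega

lemma const_val (hx : IsCLTrajectory x) {s : ℤ} (hs : s = 1 ∨ s = -1) (k : ℕ)
    (h0 : x k = s) (h1 : x (k+1) = s) : ∀ n ≥ k, x n = s := by
  have key : ∀ j, x (k+j) = s ∧ x (k+j+1) = s := by
    intro j
    induction j with
    | zero => exact ⟨h0, h1⟩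
    | succ j ih =>
      refine ⟨ih.2, ?_⟩
      show x ((k+j)+2) = s
      exact step_val hx (k+j) s ih.1 ih.2 (by rcases hs with rfl | rfl <;> norm_num)
  intro n hn
  have h2 := (key (n - k)).1
  rwa [show k + (n-k) = n by omega] at h2

lemma cycle_lem (hx : IsCLTrajectory x) {s : ℤ} (hs : s = 1 ∨ s = -1) (k : ℕ)
    (h0 : x k = 3 * s) (h1 : x (k+1) = 2 * s) : ∀ j, x (k+j) = s * c6 j := by
  have key : ∀ j, x (k+j) = s * c6 j ∧ x (k+j+1) = s * c6 (j+1) := by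
    intro j
    induction j with
    | zero =>
      constructor
      · show x k = s * c6 0
        rw [h0, show c6 0 = 3 by norm_num [c6]]; ring
      · show x (k+1) = s * c6 1
        rw [h1, show c6 1 = 2 by norm_num [c6]]; ring
    | succ j ih =>
      obtain ⟨ihj, ihj1⟩ := ih
      refine ⟨ihj1, ?_⟩
      show x ((k+j)+2) = s * c6 (j+2)
      have h6 : j % 6 = 0 ∨ j % 6 = 1 ∨ j % 6 = 2 ∨ j % 6 = 3 ∨ j % 6 = 4 ∨ j % 6 = 5 := by
        omega
      rcases h6 with h | h | h | h | h | h
      · have e1 : c6 j = 3 := by simp [c6, h]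
        have e2 : c6 (j+1) = 2 := by
          have h' : (j+1) % 6 = 1 := by omega
          simp [c6, h']
        have e3 : c6 (j+2) = -1 := by
          have h' : (j+2) % 6 = 2 := by omega
          simp [c6, h']
        rw [e1] at ihj; rw [e2] at ihj1; rw [e3]
        exact step_val hx (k+j) (s * (-1)) ihj ihj1
          (by rcases hs with rfl | rfl <;> norm_num)
      · have e1 : c6 j = 2 := by simp [c6, h]
        have e2 : c6 (j+1) = -1 := by
          have h' : (j+1) % 6 = 2 := by omega
          simp [c6, h']
        have e3 : c6 (j+2) = -3 := by
          have h' : (j+2) % 6 = 3 := by omega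
          simp [c6, h']
        rw [e1] at ihj; rw [e2] at ihj1; rw [e3]
        exact step_val hx (k+j) (s * (-3)) ihj ihj1
          (by rcases hs with rfl | rfl <;> norm_num)
      · have e1 : c6 j = -1 := by simp [c6, h]
        have e2 : c6 (j+1) = -3 := by
          have h' : (j+1) % 6 = 3 := by omega
          simp [c6, h']
        have e3 : c6 (j+2) = -2 := by
          have h' : (j+2) % 6 = 4 := by omega
          simp [c6, h']
        rw [e1] at ihj; rw [e2] at ihj1; rw [e3]
        exact step_val hx (k+j) (s * (-2)) ihj ihj1
          (by rcases hs with rfl | rfl <;> norm_num)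
      · have e1 : c6 j = -3 := by simp [c6, h]
        have e2 : c6 (j+1) = -2 := by
          have h' : (j+1) % 6 = 4 := by omega
          simp [c6, h']
        have e3 : c6 (j+2) = 1 := by
          have h' : (j+2) % 6 = 5 := by omega
          simp [c6, h']
        rw [e1] at ihj; rw [e2] at ihj1; rw [e3]
        exact step_val hx (k+j) (s * (1)) ihj ihj1
          (by rcases hs with rfl | rfl <;> norm_num)
      · have e1 : c6 j = -2 := by simp [c6, h]
        have e2 : c6 (j+1) = 1 := by
          have h' : (j+1) % 6 = 5 := by omega
          simp [c6, h']
        have e3 : c6 (j+2) = 3 := by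
          have h' : (j+2) % 6 = 0 := by omega
          simp [c6, h']
        rw [e1] at ihj; rw [e2] at ihj1; rw [e3]
        exact step_val hx (k+j) (s * (3)) ihj ihj1
          (by rcases hs with rfl | rfl <;> norm_num)
      · have e1 : c6 j = 1 := by simp [c6, h]
        have e2 : c6 (j+1) = 3 := by
          have h' : (j+1) % 6 = 0 := by omega
          simp [c6, h']
        have e3 : c6 (j+2) = 2 := by
          have h' : (j+2) % 6 = 1 := by omega
          simp [c6, h']
        rw [e1] at ihj; rw [e2] at ihj1; rw [e3]
        exact step_val hx (k+j) (s * (2)) ihj ihj1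
          (by rcases hs with rfl | rfl <;> norm_num)
  intro j
  exact (key j).1

def Concl (x : ℕ → ℤ) : Prop :=
  ∃ N : ℕ,
    (∀ n ≥ N, x n = 1) ∨
    (∀ n ≥ N, x n = -1) ∨
    ((∀ n ≥ N, x (n + 6) = x n) ∧
      ∃ r : Fin 6, ∀ i : Fin 6,
        x (N + (i : ℕ)) = ![(-2 : ℤ), 1, 3, 2, -1, -3] (i + r))

lemma concl_shift (x : ℕ → ℤ) (k : ℕ) (h : Concl (fun j => x (k + j))) : Concl x := by
  obtain ⟨N, hN⟩ := h
  refine ⟨N + k, ?_⟩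
  rcases hN with h1 | h1 | ⟨hp, r, hr⟩
  · left
    intro n hn
    have h2 := h1 (n - k) (by omega)
    simp only [] at h2
    rwa [show k + (n - k) = n by omega] at h2
  · right; left
    intro n hn
    have h2 := h1 (n - k) (by omega)
    simp only [] at h2
    rwa [show k + (n - k) = n by omega] at h2
  · right; right
    constructor
    · intro n hn
      have h2 := hp (n - k) (by omega)
      simp only [] at h2
      rw [show k + (n - k + 6) = n + 6 by omega, show k + (n - k) = n by omega] at h2
      exact h2
    · refine ⟨r, fun i => ?_⟩
      have h2 := hr i
      simp only [] at h2
      rwa [show k + (N + (i:ℕ)) = N + k + (i:ℕ) by omega] at h2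

lemma concl_from_cycle (hx : IsCLTrajectory x) {s : ℤ} (hs : s = 1 ∨ s = -1) (k : ℕ)
    (h0 : x k = 3 * s) (h1 : x (k+1) = 2 * s) : Concl x := by
  have cyc := cycle_lem hx hs k h0 h1
  refine ⟨k, Or.inr (Or.inr ⟨?_, ?_⟩)⟩
  · intro n hn
    have a1 := cyc (n - k + 6)
    have a2 := cyc (n - k)
    rw [c6_period] at a1
    rw [show k + (n - k + 6) = n + 6 by omega] at a1
    rw [show k + (n - k) = n by omega] at a2
    rw [a1, a2]
  · rcases hs with rfl | rfl
    · refine ⟨2, fun i => ?_⟩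
      fin_cases i
      · exact (cyc 0).trans (by decide)
      · exact (cyc 1).trans (by decide)
      · exact (cyc 2).trans (by decide)
      · exact (cyc 3).trans (by decide)
      · exact (cyc 4).trans (by decide)
      · exact (cyc 5).trans (by decide)
    · refine ⟨5, fun i => ?_⟩
      fin_cases i
      · exact (cyc 0).trans (by decide)
      · exact (cyc 1).trans (by decide)
      · exact (cyc 2).trans (by decide)
      · exact (cyc 3).trans (by decide)
      · exact (cyc 4).trans (by decide)
      · exact (cyc 5).trans (by decide)

lemma psi_even_par (a b : ℤ) : psi a b % 2 = 0 := by unfold psi; omega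

lemma main_aux : ∀ W : ℕ, ∀ x : ℕ → ℤ, IsCLTrajectory x → Int.gcd (x 0) (x 1) = 1 →
    psi (x 0) (x 1) ≤ W → Concl x := by
  intro W
  induction W using Nat.strong_induction_on with
  | _ W ih =>
    intro x hx hg hW
    by_cases hdrop : ∃ n, psi (x n) (x (n+1)) < psi (x 0) (x 1)
    · obtain ⟨n, hn⟩ := hdrop
      have hx' : IsCLTrajectory (fun j => x (n + j)) := fun j => hx (n + j)
      have hg' : Int.gcd (x (n+0)) (x (n+1)) = 1 := gcd_all hx hg n
      exact concl_shift x n (ih (psi (x n) (x (n+1))) (by omega) _ hx' hg' (le_refl _))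
    · push_neg at hdrop
      have hconst : ∀ n, psi (x n) (x (n+1)) = psi (x 0) (x 1) := by
        intro n
        have hle : psi (x n) (x (n+1)) ≤ psi (x 0) (x 1) := by
          induction n with
          | zero => exact le_refl _
          | succ m ihm => exact le_trans (psi_nonincr hx m) ihm
        exact le_antisymm hle (hdrop n)
      have hga := gcd_all hx hg
      have hVpar := psi_even_par (x 0) (x 1)
      have hVnz : psi (x 0) (x 1) ≠ 0 := by
        intro h
        have hz : x 0 = 0 ∧ x 1 = 0 := by unfold psi at h; omega
        rw [hz.1, hz.2] at hg
        simp [Int.gcd] at hg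
      have h3 : psi (x 0) (x 1) = 2 ∨ psi (x 0) (x 1) = 4 ∨ 6 ≤ psi (x 0) (x 1) := by omega
      rcases h3 with h2 | h4 | h6
      · have henum : (x 0 = 1 ∧ x 1 = 1) ∨ (x 0 = -1 ∧ x 1 = -1) ∨ (x 0 = 0 ∧ x 1 = 1) ∨
            (x 0 = 0 ∧ x 1 = -1) ∨ (x 0 = 1 ∧ x 1 = 0) ∨ (x 0 = -1 ∧ x 1 = 0) := by
          unfold psi at h2; omega
        rcases henum with ⟨a,b⟩|⟨a,b⟩|⟨a,b⟩|⟨a,b⟩|⟨a,b⟩|⟨a,b⟩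
        · exact ⟨0, Or.inl (const_val hx (Or.inl rfl) 0 a b)⟩
        · exact ⟨0, Or.inr (Or.inl (const_val hx (Or.inr rfl) 0 a b))⟩
        · have hs2 : x 2 = x 1 - x 0 := step_odd hx 0 (by show (x 0 + x 1) % 2 = 1; omega)
          exact ⟨1, Or.inl (const_val hx (Or.inl rfl) 1 b (by show x 2 = 1; omega))⟩
        · have hs2 : x 2 = x 1 - x 0 := step_odd hx 0 (by show (x 0 + x 1) % 2 = 1; omega)
          exact ⟨1, Or.inr (Or.inl (const_val hx (Or.inr rfl) 1 b (by show x 2 = -1; omega)))⟩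
        · have hs2 : x 2 = x 1 - x 0 := step_odd hx 0 (by show (x 0 + x 1) % 2 = 1; omega)
          have hs3 : x 3 = x 2 - x 1 := step_odd hx 1 (by show (x 1 + x 2) % 2 = 1; omega)
          exact ⟨2, Or.inr (Or.inl (const_val hx (Or.inr rfl) 2 (by omega) (by show x 3 = -1; omega)))⟩
        · have hs2 : x 2 = x 1 - x 0 := step_odd hx 0 (by show (x 0 + x 1) % 2 = 1; omega)
          have hs3 : x 3 = x 2 - x 1 := step_odd hx 1 (by show (x 1 + x 2) % 2 = 1; omega)
          exact ⟨2, Or.inl (const_val hx (Or.inl rfl) 2 (by omega) (by show x 3 = 1; omega))⟩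
      · exfalso
        obtain ⟨n, hn0, hn1⟩ := find_oo hx hga
        have he : x n + x (n+1) = 2 * x (n+2) := step_even hx n (by omega)
        have e1 : psi (x n) (x (n+1)) = 4 := by rw [hconst]; exact h4
        have e2 : psi (x (n+1)) (x (n+2)) = 4 := by rw [hconst]; exact h4
        exact psi4_absurd he hn0 hn1 e1 e2
      · obtain ⟨k, hk⟩ := reach32 hx hga hconst h6
        rcases hk with ⟨a, b⟩ | ⟨a, b⟩
        · exact concl_from_cycle hx (Or.inl rfl) k (by rw [a]; ring) (by rw [b]; ring)
        · exact concl_from_cycle hx (Or.inr rfl) k (by rw [a]; ring) (by rw [b]; ring)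

theorem clark_lewis (x : ℕ → ℤ) (hx : IsCLTrajectory x)
    (hgcd : Int.gcd (x 0) (x 1) = 1) :
    ∃ N : ℕ,
      (∀ n ≥ N, x n = 1) ∨
      (∀ n ≥ N, x n = -1) ∨
      ((∀ n ≥ N, x (n + 6) = x n) ∧
        ∃ r : Fin 6, ∀ i : Fin 6,
          x (N + (i : ℕ)) = ![(-2 : ℤ), 1, 3, 2, -1, -3] (i + r)) :=
  main_aux (psi (x 0) (x 1)) x hx hgcd (le_refl _)
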